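/- Finite-state completeness of the stochastic-invariant rule for lower bounds: Let M be a finitely-branching MDP with absorbing terminal state ⊥ whose state space S is finite, with initial state σ, and suppose Pr_term(σ) ≥ 1 − p for some p ∈ [0,1). Then there exists a set Ψ ⊆ S with σ ∈ Ψ and ⊥ ∈ Ψ such that (Ψ, p) is a stochastic invariant for σ and, for every scheduler 𝔰, ℙ_{𝔰,σ}(the run visits ⊥ or some state of the run lies outside Ψ) = 1. -/

import Mathlib

open scoped ENNReal Classical

/-- A finitely-branching MDP on a state space `S`: each state has a nonempty finite
set of available actions, each a finitely-supported PMF on `S`. -/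
structure MDP (S : Type) where
  act : S → Finset (PMF S)
  act_nonempty : ∀ s, (act s).Nonempty
  act_finSupp : ∀ s, ∀ μ ∈ act s, (μ : PMF S).support.Finite

/-- A scheduler maps every history `(s₀, …, sₙ)` (given as the list of earlier
states `s₀, …, sₙ₋₁` together with the current state `sₙ`) to an available action. -/
structure Scheduler {S : Type} (M : MDP S) where
  choose : List S → S → PMF S
  choose_mem : ∀ hist s, choose hist s ∈ M.act s

namespace MDP

variable {S : Type}

/-- Reachability: `s'` is reachable from `σ` via a finite path each of whose steps
lies in the support of some available action. -/
inductive Reach (M : MDP S) (σ : S) : S → Prop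
  | refl : Reach M σ σ
  | step {s s' : S} (μ : PMF S) : Reach M σ s → μ ∈ M.act s → s' ∈ μ.support → Reach M σ s'

/-- Probability that the run (currently at `s`, with past history `hist`) visits the
set `T` within the next `k` steps, under scheduler `𝔰`. -/
noncomputable def hitProbAux (M : MDP S) (𝔰 : Scheduler M) (T : Set S) :
    ℕ → List S → S → ℝ≥0∞
  | 0, _, s => if s ∈ T then 1 else 0
  | k + 1, hist, s =>
      if s ∈ T then 1
      else ∑' s', (𝔰.choose hist s) s' * hitProbAux M 𝔰 T k (hist ++ [s]) s'

/-- Probability that the run started at `σ` visits `T` within the first `k` steps. -/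
noncomputable def hitProbWithin (M : MDP S) (𝔰 : Scheduler M) (σ : S) (T : Set S)
    (k : ℕ) : ℝ≥0∞ :=
  hitProbAux M 𝔰 T k [] σ

/-- Probability that the run started at `σ` ever visits `T`, under scheduler `𝔰`. -/
noncomputable def hitProb (M : MDP S) (𝔰 : Scheduler M) (σ : S) (T : Set S) : ℝ≥0∞ :=
  ⨆ k, hitProbWithin M 𝔰 σ T k

/-- The terminal state `term` is absorbing: the only action there is the Dirac PMF. -/
def Absorbing (M : MDP S) (term : S) : Prop :=
  M.act term = {PMF.pure term}

/-- Termination probability: infimum over schedulers of the probability of visiting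
the terminal state. -/
noncomputable def PrTerm (M : MDP S) (term σ : S) : ℝ≥0∞ :=
  ⨅ 𝔰 : Scheduler M, hitProb M 𝔰 σ {term}

/-- Almost-sure termination from `σ`. -/
def AST (M : MDP S) (term σ : S) : Prop := PrTerm M term σ = 1

/-- Mass a PMF assigns to a set. -/
noncomputable def mass (μ : PMF S) (A : Set S) : ℝ≥0∞ := ∑' a : A, μ a

/-- Expected value of a real-valued function under a (finitely supported) PMF. -/
noncomputable def expect (μ : PMF S) (V : S → ℝ) : ℝ := ∑' s, (μ s).toReal * V s

/-- `V` is a supermartingale function on the states reachable from `σ`. -/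
def SupermartingaleOn (M : MDP S) (σ : S) (V : S → ℝ) : Prop :=
  ∀ s, M.Reach σ s → ∀ μ ∈ M.act s, expect μ V ≤ V s

/-- `(Ψ, p)` is a stochastic invariant for initial state `σ`: under every scheduler the
probability that the run ever leaves `Ψ` is at most `p`. -/
def StochasticInvariant (M : MDP S) (σ : S) (Ψ : Set S) (p : ℝ) : Prop :=
  ⨆ 𝔰 : Scheduler M, hitProb M 𝔰 σ Ψᶜ ≤ ENNReal.ofReal p

end MDP

section Aux
open MDP
variable {S : Type}

noncomputable def MDP.defaultSched (M : MDP S) : Scheduler M :=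
  ⟨fun _ s => (M.act_nonempty s).choose, fun _ s => (M.act_nonempty s).choose_spec⟩

instance (M : MDP S) : Nonempty (Scheduler M) := ⟨M.defaultSched⟩

variable {M : MDP S} {T : Set S} (𝔰 : Scheduler M)

lemma hitAux_le_one : ∀ k hist s, M.hitProbAux 𝔰 T k hist s ≤ 1 := by
  intro k
  induction k with
  | zero => intro hist s; simp only [MDP.hitProbAux]; split <;> simp
  | succ k ih =>
    intro hist s
    simp only [MDP.hitProbAux]
    split
    · exact le_refl _
    · calc ∑' s', (𝔰.choose hist s) s' * M.hitProbAux 𝔰 T k (hist ++ [s]) s'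
          ≤ ∑' s', (𝔰.choose hist s) s' * 1 :=
            ENNReal.tsum_le_tsum fun s' => mul_le_mul_right (ih _ _) _
        _ = 1 := by simp [(𝔰.choose hist s).tsum_coe]

lemma hitAux_mono_succ : ∀ k hist s, M.hitProbAux 𝔰 T k hist s ≤ M.hitProbAux 𝔰 T (k+1) hist s := by
  intro k
  induction k with
  | zero =>
    intro hist s; simp only [MDP.hitProbAux]
    split
    · exact le_refl _
    · exact zero_le
  | succ k ih =>
    intro hist s
    simp only [MDP.hitProbAux]
    split
    · exact le_refl _
    · exact ENNReal.tsum_le_tsum fun s' => mul_le_mul_right (ih _ _) _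

lemma hitAux_mono_target {T' : Set S} (hTT : T ⊆ T') :
    ∀ k hist s, M.hitProbAux 𝔰 T k hist s ≤ M.hitProbAux 𝔰 T' k hist s := by
  intro k
  induction k with
  | zero =>
    intro hist s; simp only [MDP.hitProbAux]
    split
    · next h => simp [hTT h]
    · exact zero_le
  | succ k ih =>
    intro hist s
    simp only [MDP.hitProbAux]
    split
    · next h => simp [hTT h]
    · split
      · calc ∑' s', (𝔰.choose hist s) s' * M.hitProbAux 𝔰 T k (hist ++ [s]) s'
              ≤ ∑' s', (𝔰.choose hist s) s' * 1 :=
                ENNReal.tsum_le_tsum fun s' => mul_le_mul_right (hitAux_le_one 𝔰 _ _ _) _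
            _ = 1 := by simp [(𝔰.choose hist s).tsum_coe]
      · exact ENNReal.tsum_le_tsum fun s' => mul_le_mul_right (ih _ _) _

end Aux

section Aux2
open MDP
variable {S : Type} {M : MDP S} {T : Set S} (𝔰 : Scheduler M)

noncomputable def avoidAux (M : MDP S) (𝔰 : Scheduler M) (T : Set S) :
    ℕ → List S → S → ℝ≥0∞
  | 0, _, s => if s ∈ T then 0 else 1
  | k + 1, hist, s =>
      if s ∈ T then 0
      else ∑' s', (𝔰.choose hist s) s' * avoidAux M 𝔰 T k (hist ++ [s]) s'

lemma avoidAux_of_mem {s : S} (h : s ∈ T) (k : ℕ) (hist : List S) :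
    avoidAux M 𝔰 T k hist s = 0 := by
  cases k <;> simp [avoidAux, h]

lemma avoidAux_le_one : ∀ k hist s, avoidAux M 𝔰 T k hist s ≤ 1 := by
  intro k
  induction k with
  | zero => intro hist s; simp only [avoidAux]; split <;> simp
  | succ k ih =>
    intro hist s
    simp only [avoidAux]
    split
    · exact zero_le
    · calc ∑' s', (𝔰.choose hist s) s' * avoidAux M 𝔰 T k (hist ++ [s]) s'
          ≤ ∑' s', (𝔰.choose hist s) s' * 1 :=
            ENNReal.tsum_le_tsum fun s' => mul_le_mul_right (ih _ _) _
        _ = 1 := by simp [(𝔰.choose hist s).tsum_coe]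

lemma hit_add_avoid : ∀ k hist s,
    M.hitProbAux 𝔰 T k hist s + avoidAux M 𝔰 T k hist s = 1 := by
  intro k
  induction k with
  | zero => intro hist s; simp only [MDP.hitProbAux, avoidAux]; split <;> simp
  | succ k ih =>
    intro hist s
    simp only [MDP.hitProbAux, avoidAux]
    split
    · simp
    · rw [← ENNReal.tsum_add]
      calc ∑' s', ((𝔰.choose hist s) s' * M.hitProbAux 𝔰 T k (hist ++ [s]) s'
              + (𝔰.choose hist s) s' * avoidAux M 𝔰 T k (hist ++ [s]) s')
          = ∑' s', (𝔰.choose hist s) s' := by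
            refine tsum_congr fun s' => ?_
            rw [← mul_add, ih, mul_one]
        _ = 1 := (𝔰.choose hist s).tsum_coe

lemma avoid_comp {m : ℕ} {c : ℝ≥0∞} (hc : ∀ hist s, avoidAux M 𝔰 T m hist s ≤ c) :
    ∀ a hist s, avoidAux M 𝔰 T (a + m) hist s ≤ c * avoidAux M 𝔰 T a hist s := by
  intro a
  induction a with
  | zero =>
    intro hist s
    rw [Nat.zero_add]
    by_cases h : s ∈ T
    · rw [avoidAux_of_mem 𝔰 h]; exact zero_le
    · simp only [avoidAux, if_neg h, mul_one]; exact hc hist s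
  | succ a ih =>
    intro hist s
    have : a + 1 + m = (a + m) + 1 := by omega
    rw [this]
    simp only [avoidAux]
    split
    · exact zero_le
    · rw [ENNReal.tsum_mul_left.symm]
      refine ENNReal.tsum_le_tsum fun s' => ?_
      rw [show c * ((𝔰.choose hist s) s' * avoidAux M 𝔰 T a (hist ++ [s]) s')
            = (𝔰.choose hist s) s' * (c * avoidAux M 𝔰 T a (hist ++ [s]) s') by ring]
      exact mul_le_mul_right (ih _ _) _

lemma hitAux_congr_all {𝔰₁ 𝔰₂ : Scheduler M} {h₁ h₂ : List S}
    (H : ∀ t s', 𝔰₁.choose (h₁ ++ t) s' = 𝔰₂.choose (h₂ ++ t) s') :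
    ∀ k t s, M.hitProbAux 𝔰₁ T k (h₁ ++ t) s = M.hitProbAux 𝔰₂ T k (h₂ ++ t) s := by
  intro k
  induction k with
  | zero => intro t s; simp only [MDP.hitProbAux]
  | succ k ih =>
    intro t s
    simp only [MDP.hitProbAux]
    split
    · rfl
    · rw [H t s]
      refine tsum_congr fun s' => ?_
      rw [List.append_assoc h₁ t [s], List.append_assoc h₂ t [s]]
      rw [ih (t ++ [s]) s']

lemma hitAux_congr {𝔰₁ 𝔰₂ : Scheduler M} {h₁ h₂ : List S} {s : S}
    (H0 : 𝔰₁.choose h₁ s = 𝔰₂.choose h₂ s)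
    (H1 : ∀ t s', 𝔰₁.choose ((h₁ ++ [s]) ++ t) s' = 𝔰₂.choose ((h₂ ++ [s]) ++ t) s') :
    ∀ k, M.hitProbAux 𝔰₁ T k h₁ s = M.hitProbAux 𝔰₂ T k h₂ s := by
  intro k
  cases k with
  | zero => simp only [MDP.hitProbAux]
  | succ k =>
    simp only [MDP.hitProbAux]
    split
    · rfl
    · rw [H0]
      refine tsum_congr fun s' => ?_
      have h2 := hitAux_congr_all (T := T) H1 k [] s'
      simp only [List.append_nil] at h2
      rw [h2]

lemma hitAux_term_absorb {term : S} (hterm : M.Absorbing term) (hT : term ∉ T) :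
    ∀ k hist, M.hitProbAux 𝔰 T k hist term = 0 := by
  intro k
  induction k with
  | zero => intro hist; simp only [MDP.hitProbAux, if_neg hT]
  | succ k ih =>
    intro hist
    have hch : 𝔰.choose hist term = PMF.pure term := by
      have h := 𝔰.choose_mem hist term
      rw [hterm] at h
      exact Finset.mem_singleton.mp h
    simp only [MDP.hitProbAux, if_neg hT, hch]
    have : ∀ s', s' ≠ term →
        (PMF.pure term) s' * M.hitProbAux 𝔰 T k (hist ++ [term]) s' = 0 := by
      intro s' hs'
      simp [PMF.pure_apply, hs']
    rw [tsum_eq_single term this]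
    simp [ih]

end Aux2

set_option linter.unusedSectionVars false
section Aux3
open MDP
variable {S : Type} [Fintype S] {M : MDP S} {term : S}

noncomputable def Vit (M : MDP S) (term : S) : ℕ → S → ℝ≥0∞
  | 0, s => if s = term then 1 else 0
  | k + 1, s =>
      if s = term then 1
      else ⨅ μ ∈ M.act s, ∑' s', (μ : PMF S) s' * Vit M term k s'

lemma Vit_term (k : ℕ) : Vit M term k term = 1 := by cases k <;> simp [Vit]

lemma Vit_mono_succ : ∀ k s, Vit M term k s ≤ Vit M term (k+1) s := by
  intro k
  induction k with
  | zero =>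
    intro s; simp only [Vit]; split
    · exact le_refl _
    · exact zero_le
  | succ k ih =>
    intro s
    simp only [Vit]
    split
    · exact le_refl _
    · exact iInf_mono fun μ => iInf_mono fun _ =>
        ENNReal.tsum_le_tsum fun s' => mul_le_mul_right (ih s') _

lemma Vit_mono (s : S) : Monotone fun k => Vit M term k s :=
  monotone_nat_of_le_succ fun k => Vit_mono_succ k s

lemma Vit_le_hitAux (𝔰 : Scheduler M) :
    ∀ k hist s, Vit M term k s ≤ M.hitProbAux 𝔰 {term} k hist s := by
  intro k
  induction k with
  | zero =>
    intro hist s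
    simp only [Vit, MDP.hitProbAux, Set.mem_singleton_iff]
    split <;> simp
  | succ k ih =>
    intro hist s
    simp only [Vit, MDP.hitProbAux, Set.mem_singleton_iff]
    split
    · exact le_refl _
    · refine le_trans (iInf₂_le (𝔰.choose hist s) (𝔰.choose_mem hist s)) ?_
      exact ENNReal.tsum_le_tsum fun s' => mul_le_mul_right (ih _ _) _

/-- sup of finite inf of monotone sequences -/
lemma iSup_finsetInf {t : Finset (PMF S)} {f : PMF S → ℕ → ℝ≥0∞}
    (hf : ∀ μ, Monotone (f μ)) :
    ⨆ k, ⨅ μ ∈ t, f μ k = ⨅ μ ∈ t, ⨆ k, f μ k := by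
  apply le_antisymm
  · exact iSup_le fun k => iInf₂_mono fun μ _ => le_iSup _ k
  · apply le_of_forall_lt
    intro c hc
    have h1 : ∀ μ, ∃ k, μ ∈ t → c < f μ k := by
      intro μ
      by_cases hμ : μ ∈ t
      · have hlt : c < ⨆ k, f μ k := hc.trans_le (iInf₂_le μ hμ)
        obtain ⟨k, hk⟩ := lt_iSup_iff.mp hlt
        exact ⟨k, fun _ => hk⟩
      · exact ⟨0, fun h => absurd h hμ⟩
    choose g hg using h1
    have hK : ∀ μ ∈ t, c < f μ (t.sup g) := fun μ hμ =>
      (hg μ hμ).trans_le (hf μ (Finset.le_sup hμ))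
    have hct : c < ⊤ := lt_of_lt_of_le hc le_top
    have : c < ⨅ μ ∈ t, f μ (t.sup g) := by
      rw [← Finset.inf_eq_iInf]
      exact (Finset.lt_inf_iff hct).mpr hK
    exact this.trans_le (le_iSup (fun k => ⨅ μ ∈ t, f μ k) (t.sup g))

lemma tsum_mul_iSup (μ : PMF S) (V : ℕ → S → ℝ≥0∞) (hV : ∀ s, Monotone fun k => V k s) :
    ∑' s, μ s * ⨆ k, V k s = ⨆ k, ∑' s, μ s * V k s := by
  simp only [tsum_fintype]
  rw [← ENNReal.finsetSum_iSup_of_monotone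
    (fun s i j hij => mul_le_mul_right (hV s hij) (μ s))]
  exact Finset.sum_congr rfl fun s _ => ENNReal.mul_iSup (a := μ s) (f := fun k => V k s)

lemma Vstar_ge (s : S) (hs : s ≠ term) :
    ⨅ μ ∈ M.act s, ∑' s', (μ : PMF S) s' * (⨆ k, Vit M term k s')
      ≤ ⨆ k, Vit M term k s := by
  have e1 : ∀ μ : PMF S, ∑' s', μ s' * (⨆ k, Vit M term k s')
      = ⨆ k, ∑' s', μ s' * Vit M term k s' := by
    intro μ
    exact tsum_mul_iSup μ (fun k s' => Vit M term k s') (fun s' => Vit_mono s')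
  have e2 : ⨅ μ ∈ M.act s, ∑' s', (μ : PMF S) s' * (⨆ k, Vit M term k s')
      = ⨅ μ ∈ M.act s, ⨆ k, ∑' s', (μ : PMF S) s' * Vit M term k s' := by
    exact iInf_congr fun μ => iInf_congr fun _ => e1 μ
  have e3 : ⨅ μ ∈ M.act s, ⨆ k, ∑' s', (μ : PMF S) s' * Vit M term k s'
      = ⨆ k, ⨅ μ ∈ M.act s, ∑' s', (μ : PMF S) s' * Vit M term k s' := by
    exact (iSup_finsetInf (t := M.act s)
      (f := fun μ k => ∑' s', (μ : PMF S) s' * Vit M term k s')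
      (fun μ => monotone_nat_of_le_succ fun k =>
        ENNReal.tsum_le_tsum fun s' => mul_le_mul_right (Vit_mono_succ k s') _)).symm
  have e4 : ⨆ k, ⨅ μ ∈ M.act s, ∑' s', (μ : PMF S) s' * Vit M term k s'
      ≤ ⨆ k, Vit M term k s := by
    refine iSup_le fun k => ?_
    refine le_trans ?_ (le_iSup (fun k => Vit M term k s) (k+1))
    simp only [Vit, if_neg hs]
    exact le_refl _
  rw [e2, e3]
  exact e4
lemma PrTerm_le_Vstar (s : S) : M.PrTerm term s ≤ ⨆ k, Vit M term k s := by
  have hex : ∀ u : S, ∃ μ ∈ M.act u, ∀ ν ∈ M.act u,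
      (∑' s', (μ : PMF S) s' * ⨆ k, Vit M term k s')
        ≤ ∑' s', (ν : PMF S) s' * ⨆ k, Vit M term k s' :=
    fun u => Finset.exists_min_image _ _ (M.act_nonempty u)
  choose μs hmem hmin using hex
  let 𝔰 : Scheduler M := ⟨fun _ u => μs u, fun _ u => hmem u⟩
  have key : ∀ k hist u, M.hitProbAux 𝔰 {term} k hist u ≤ ⨆ j, Vit M term j u := by
    intro k
    induction k with
    | zero =>
      intro hist u
      simp only [MDP.hitProbAux, Set.mem_singleton_iff]
      split
      · next h => subst h; exact le_iSup_of_le 0 (by simp [Vit])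
      · exact zero_le
    | succ k ih =>
      intro hist u
      simp only [MDP.hitProbAux, Set.mem_singleton_iff]
      split
      · next h => subst h; exact le_iSup_of_le 0 (by simp [Vit])
      · next h =>
        calc ∑' s', (𝔰.choose hist u) s' * M.hitProbAux 𝔰 {term} k (hist ++ [u]) s'
            ≤ ∑' s', (μs u : PMF S) s' * ⨆ j, Vit M term j s' :=
              ENNReal.tsum_le_tsum fun s' => mul_le_mul_right (ih _ _) _
          _ ≤ ⨅ ν ∈ M.act u, ∑' s', (ν : PMF S) s' * ⨆ j, Vit M term j s' :=
              le_iInf₂ fun ν hν => hmin u ν hν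
          _ ≤ ⨆ j, Vit M term j u := Vstar_ge u h
  refine le_trans (iInf_le _ 𝔰) ?_
  exact iSup_le fun k => key k [] s

end Aux3

section Aux4
open MDP
variable {S : Type}

noncomputable def firstIn (Z : Set S) : List S → Option (S × List S)
  | [] => none
  | a :: l => if a ∈ Z then some (a, a :: l) else firstIn Z l

lemma firstIn_none {Z : Set S} : ∀ {l : List S}, (∀ a ∈ l, a ∉ Z) → firstIn Z l = none := by
  intro l
  induction l with
  | nil => intro _; rfl
  | cons a l ih =>
    intro h
    simp only [firstIn, if_neg (h a (List.mem_cons_self))]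
    exact ih fun b hb => h b (List.mem_cons_of_mem a hb)

lemma firstIn_append {Z : Set S} : ∀ {h : List S}, (∀ a ∈ h, a ∉ Z) → ∀ {s : S}, s ∈ Z →
    ∀ t : List S, firstIn Z (h ++ s :: t) = some (s, s :: t) := by
  intro h
  induction h with
  | nil => intro _ s hs t; simp [firstIn, hs]
  | cons a l ih =>
    intro hcl s hs t
    have ha : a ∉ Z := hcl a (List.mem_cons_self)
    simp only [List.cons_append, firstIn, if_neg ha]
    exact ih (fun b hb => hcl b (List.mem_cons_of_mem a hb)) hs t

variable {M : MDP S}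

noncomputable def switchChoose (Z : Set S) (𝔰 : Scheduler M) (esc : S → Scheduler M)
    (hist : List S) (s : S) : PMF S :=
  match firstIn Z hist with
  | some (z, rest) => (esc z).choose rest s
  | none => if s ∈ Z then (esc s).choose [] s else 𝔰.choose hist s

lemma switchChoose_some {Z : Set S} {𝔰 : Scheduler M} {esc : S → Scheduler M}
    {hist : List S} {z : S} {rest : List S} (hfi : firstIn Z hist = some (z, rest)) (s : S) :
    switchChoose Z 𝔰 esc hist s = (esc z).choose rest s := by
  unfold switchChoose; rw [hfi]

lemma switchChoose_none {Z : Set S} {𝔰 : Scheduler M} {esc : S → Scheduler M}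
    {hist : List S} (hfi : firstIn Z hist = none) (s : S) :
    switchChoose Z 𝔰 esc hist s = if s ∈ Z then (esc s).choose [] s else 𝔰.choose hist s := by
  unfold switchChoose; rw [hfi]

lemma switchChoose_mem (Z : Set S) (𝔰 : Scheduler M) (esc : S → Scheduler M)
    (hist : List S) (s : S) : switchChoose Z 𝔰 esc hist s ∈ M.act s := by
  rcases hfi : firstIn Z hist with _ | ⟨z, rest⟩
  · rw [switchChoose_none hfi]
    split
    · exact (esc s).choose_mem [] s
    · exact 𝔰.choose_mem hist s
  · rw [switchChoose_some hfi]
    exact (esc z).choose_mem rest s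

noncomputable def switchSched (Z : Set S) (𝔰 : Scheduler M) (esc : S → Scheduler M) :
    Scheduler M :=
  ⟨switchChoose Z 𝔰 esc, switchChoose_mem Z 𝔰 esc⟩

lemma iInf_pow_eq_zero {c : ℝ≥0∞} (hc : c < 1) : (⨅ n : ℕ, c ^ n) = 0 := by
  have hct : c ≠ ⊤ := hc.ne_top
  rw [← le_zero_iff]
  refine ENNReal.le_of_forall_pos_le_add fun ε hε _ => ?_
  rw [zero_add]
  by_cases h0 : c = 0
  · exact le_trans (iInf_le _ 1) (by simp [h0])
  · have h1 : c.toNNReal < 1 := by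
      rwa [← ENNReal.coe_lt_one_iff, ENNReal.coe_toNNReal hct]
    obtain ⟨n, hn⟩ := NNReal.exists_pow_lt_of_lt_one hε h1
    refine le_trans (iInf_le _ n) ?_
    calc c ^ n = ((c.toNNReal : ℝ≥0∞)) ^ n := by rw [ENNReal.coe_toNNReal hct]
      _ ≤ (ε : ℝ≥0∞) := by exact_mod_cast hn.le
end Aux4



/-- **Finite-state completeness of the stochastic-invariant rule for lower bounds.** If the
state space is finite and the termination probability from `σ` is at least `1 - p`, then
there is a set `Ψ` containing `σ` and the terminal state such that `(Ψ, p)` is a stochastic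
invariant for `σ` and, under every scheduler, the run almost surely either visits the
terminal state or leaves `Ψ`. -/
theorem lower_bound_rule_complete_finite {S : Type} [Fintype S] (M : MDP S) (term σ : S)
    (hterm : M.Absorbing term)
    (p : ℝ) (hp0 : 0 ≤ p) (hp1 : p < 1)
    (hlb : ENNReal.ofReal (1 - p) ≤ M.PrTerm term σ) :
    ∃ Ψ : Set S, σ ∈ Ψ ∧ term ∈ Ψ ∧
      M.StochasticInvariant σ Ψ p ∧
      ∀ 𝔰 : Scheduler M, M.hitProb 𝔰 σ ({term} ∪ Ψᶜ) = 1 := by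
  classical
  set Z : Set S := {s | M.PrTerm term s = 0} with hZdef
  have hσ : σ ∉ Z := by
    intro h
    have h0 : M.PrTerm term σ = 0 := h
    rw [h0] at hlb
    have hpos : (0:ℝ) < 1 - p := by linarith
    exact (ENNReal.ofReal_pos.mpr hpos).ne' (le_antisymm hlb (zero_le))
  have htermPr : (1:ℝ≥0∞) ≤ M.PrTerm term term := by
    refine le_iInf fun 𝔱 => ?_
    refine le_iSup_of_le 0 ?_
    simp [MDP.hitProbWithin, MDP.hitProbAux]
  have hterm' : term ∉ Z := by
    intro h
    have h0 : M.PrTerm term term = 0 := h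
    rw [h0] at htermPr
    exact absurd htermPr (by simp)
  refine ⟨Zᶜ, hσ, hterm', ?_, ?_⟩
  · -- stochastic invariant
    unfold MDP.StochasticInvariant
    rw [compl_compl]
    refine iSup_le fun 𝔰 => ?_
    refine ENNReal.le_of_forall_pos_le_add fun ε hε _ => ?_
    have hεE : (0:ℝ≥0∞) < ε := ENNReal.coe_pos.mpr hε
    have hesc : ∀ z : S, ∃ 𝔢 : Scheduler M, z ∈ Z → M.hitProb 𝔢 z {term} ≤ ε := by
      intro z
      by_cases hz : z ∈ Z
      · have hzz : M.PrTerm term z = 0 := hz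
        have hlt : (⨅ 𝔱 : Scheduler M, M.hitProb 𝔱 z {term}) < ε := by
          have : (⨅ 𝔱 : Scheduler M, M.hitProb 𝔱 z {term}) = M.PrTerm term z := rfl
          rw [this, hzz]; exact hεE
        obtain ⟨𝔢, h𝔢⟩ := iInf_lt_iff.mp hlt
        exact ⟨𝔢, fun _ => h𝔢.le⟩
      · exact ⟨M.defaultSched, fun h => absurd h hz⟩
    choose esc hescP using hesc
    set 𝔰' := switchSched Z 𝔰 esc with h𝔰'
    have key : ∀ k hist, (∀ a ∈ hist, a ∉ Z) → ∀ s,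
        M.hitProbAux 𝔰' {term} k hist s + M.hitProbAux 𝔰 Z k hist s ≤ 1 + (ε : ℝ≥0∞) := by
      intro k
      induction k with
      | zero =>
        intro hist hcl s
        by_cases h1 : s ∈ ({term} : Set S)
        · have hsZ : s ∉ Z := by rw [show s = term from h1]; exact hterm'
          simp only [MDP.hitProbAux, if_pos h1, if_neg hsZ]
          simpa using le_self_add
        · by_cases h2 : s ∈ Z
          · simp only [MDP.hitProbAux, if_neg h1, if_pos h2]
            simpa using le_self_add
          · simp only [MDP.hitProbAux, if_neg h1, if_neg h2]
            simp
      | succ k ih =>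
        intro hist hcl s
        by_cases hsZ : s ∈ Z
        · have hfin : firstIn Z hist = none := firstIn_none hcl
          have H0 : 𝔰'.choose hist s = (esc s).choose [] s := by
            show switchChoose Z 𝔰 esc hist s = _
            rw [switchChoose_none hfin, if_pos hsZ]
          have H1 : ∀ t s', 𝔰'.choose ((hist ++ [s]) ++ t) s'
              = (esc s).choose (([] ++ [s]) ++ t) s' := by
            intro t s'
            have ha : (hist ++ [s]) ++ t = hist ++ (s :: t) := by simp
            show switchChoose Z 𝔰 esc ((hist ++ [s]) ++ t) s' = _
            rw [ha, switchChoose_some (firstIn_append hcl hsZ t)]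
            simp
          have e1 : M.hitProbAux 𝔰' {term} (k+1) hist s
              = M.hitProbAux (esc s) {term} (k+1) [] s := hitAux_congr H0 H1 (k+1)
          have e2 : M.hitProbAux (esc s) {term} (k+1) [] s ≤ (ε : ℝ≥0∞) := by
            refine le_trans ?_ (hescP s hsZ)
            exact le_iSup (fun j => M.hitProbWithin (esc s) s {term} j) (k+1)
          rw [e1]
          calc M.hitProbAux (esc s) {term} (k+1) [] s + M.hitProbAux 𝔰 Z (k+1) hist s
              ≤ (ε : ℝ≥0∞) + 1 := add_le_add e2 (hitAux_le_one 𝔰 (k+1) hist s)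
            _ = 1 + ε := add_comm _ _
        · by_cases hst : s = term
          · have e0 : M.hitProbAux 𝔰 Z (k+1) hist s = 0 := by
              rw [hst]; exact hitAux_term_absorb 𝔰 hterm hterm' (k+1) hist
            rw [e0, add_zero]
            exact le_trans (hitAux_le_one 𝔰' (k+1) hist s) le_self_add
          · have hs1 : s ∉ ({term} : Set S) := by simpa using hst
            have hch : 𝔰'.choose hist s = 𝔰.choose hist s := by
              show switchChoose Z 𝔰 esc hist s = _
              rw [switchChoose_none (firstIn_none hcl), if_neg hsZ]
            simp only [MDP.hitProbAux, if_neg hs1, if_neg hsZ, hch]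
            rw [← ENNReal.tsum_add]
            have hcl' : ∀ a ∈ hist ++ [s], a ∉ Z := by
              intro a ha
              rcases List.mem_append.mp ha with h | h
              · exact hcl a h
              · rw [List.mem_singleton.mp h]; exact hsZ
            calc ∑' s', ((𝔰.choose hist s) s' * M.hitProbAux 𝔰' {term} k (hist ++ [s]) s'
                    + (𝔰.choose hist s) s' * M.hitProbAux 𝔰 Z k (hist ++ [s]) s')
                = ∑' s', (𝔰.choose hist s) s' * (M.hitProbAux 𝔰' {term} k (hist ++ [s]) s'
                    + M.hitProbAux 𝔰 Z k (hist ++ [s]) s') :=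
                  tsum_congr fun s' => (mul_add _ _ _).symm
              _ ≤ ∑' s', (𝔰.choose hist s) s' * (1 + (ε : ℝ≥0∞)) :=
                  ENNReal.tsum_le_tsum fun s' => mul_le_mul_right (ih (hist ++ [s]) hcl' s') _
              _ = 1 + (ε : ℝ≥0∞) := by
                  rw [ENNReal.tsum_mul_right, (𝔰.choose hist s).tsum_coe, one_mul]
    have hmono : ∀ (𝔱 : Scheduler M) (T : Set S),
        Monotone fun k => M.hitProbAux 𝔱 T k [] σ := fun 𝔱 T =>
      monotone_nat_of_le_succ fun k => hitAux_mono_succ 𝔱 k [] σ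
    have hsum : M.hitProb 𝔰' σ {term} + M.hitProb 𝔰 σ Z ≤ 1 + (ε : ℝ≥0∞) := by
      rw [MDP.hitProb, MDP.hitProb, ENNReal.iSup_add]
      refine iSup_le fun i => ?_
      rw [ENNReal.add_iSup]
      refine iSup_le fun j => ?_
      calc M.hitProbWithin 𝔰' σ {term} i + M.hitProbWithin 𝔰 σ Z j
          ≤ M.hitProbAux 𝔰' {term} (max i j) [] σ + M.hitProbAux 𝔰 Z (max i j) [] σ :=
            add_le_add (hmono 𝔰' {term} (le_max_left i j)) (hmono 𝔰 Z (le_max_right i j))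
        _ ≤ 1 + (ε : ℝ≥0∞) := key (max i j) [] (by simp) σ
    have h1 : ENNReal.ofReal (1 - p) + M.hitProb 𝔰 σ Z ≤ 1 + (ε : ℝ≥0∞) :=
      le_trans (add_le_add_left (le_trans hlb (iInf_le _ 𝔰')) _) hsum
    have hsplit : (1:ℝ≥0∞) = ENNReal.ofReal (1 - p) + ENNReal.ofReal p := by
      rw [← ENNReal.ofReal_add (by linarith) hp0]
      norm_num
    rw [hsplit, add_assoc] at h1
    exact (ENNReal.add_le_add_iff_left ENNReal.ofReal_ne_top).mp h1
  · -- almost-sure hitting of {term} ∪ Z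
    intro 𝔰
    rw [compl_compl]
    set T : Set S := {term} ∪ Z with hT
    have hVs : ∀ s : S, ∃ k, M.PrTerm term s ≠ 0 → 0 < Vit M term k s := by
      intro s
      by_cases h : M.PrTerm term s = 0
      · exact ⟨0, fun h' => absurd h h'⟩
      · have hpos : 0 < ⨆ k, Vit M term k s :=
          lt_of_lt_of_le (pos_iff_ne_zero.mpr h) (PrTerm_le_Vstar s)
        obtain ⟨k, hk⟩ := lt_iSup_iff.mp hpos
        exact ⟨k, fun _ => hk⟩
    choose ks hks using hVs
    set N := Finset.univ.sup ks with hN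
    have hVN : ∀ s : S, s ∉ Z → 0 < Vit M term N s := by
      intro s hs
      exact lt_of_lt_of_le (hks s hs) (Vit_mono s (Finset.le_sup (Finset.mem_univ s)))
    have hFne : (Finset.univ.filter (fun s : S => s ∉ Z)).Nonempty :=
      ⟨term, by simp [hterm']⟩
    obtain ⟨s₀, hs₀F, hs₀min⟩ := Finset.exists_min_image _ (Vit M term N) hFne
    set δ := Vit M term N s₀ with hδ
    have hδpos : 0 < δ := hVN s₀ (Finset.mem_filter.mp hs₀F).2
    have hδle : ∀ s : S, s ∉ Z → δ ≤ Vit M term N s := fun s hs =>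
      hs₀min s (Finset.mem_filter.mpr ⟨Finset.mem_univ s, hs⟩)
    have havoid : ∀ hist s, avoidAux M 𝔰 T N hist s ≤ 1 - δ := by
      intro hist s
      by_cases hsT : s ∈ T
      · rw [avoidAux_of_mem 𝔰 hsT]; exact zero_le
      · have hsZ : s ∉ Z := fun h => hsT (Or.inr h)
        have h1 : δ ≤ M.hitProbAux 𝔰 T N hist s :=
          le_trans (hδle s hsZ) (le_trans (Vit_le_hitAux 𝔰 N hist s)
            (hitAux_mono_target 𝔰 Set.subset_union_left N hist s))
        have h3 : δ + avoidAux M 𝔰 T N hist s ≤ 1 := by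
          rw [← hit_add_avoid 𝔰 N hist s]
          exact add_le_add_left h1 _
        have hδ1 : δ ≤ 1 :=
          (Vit_le_hitAux M.defaultSched N [] s₀).trans (hitAux_le_one _ _ _ _)
        exact ENNReal.le_sub_of_add_le_left (hδ1.trans_lt ENNReal.one_lt_top).ne h3
    have hpow : ∀ n : ℕ, avoidAux M 𝔰 T (n * N) [] σ ≤ (1 - δ) ^ n := by
      intro n
      induction n with
      | zero => simpa using avoidAux_le_one 𝔰 0 [] σ
      | succ n ihn =>
        have hmul : (n + 1) * N = n * N + N := by ring
        rw [hmul, pow_succ]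
        calc avoidAux M 𝔰 T (n * N + N) [] σ
            ≤ (1 - δ) * avoidAux M 𝔰 T (n * N) [] σ := avoid_comp 𝔰 havoid (n * N) [] σ
          _ ≤ (1 - δ) * (1 - δ) ^ n := mul_le_mul_right ihn _
          _ = (1 - δ) ^ n * (1 - δ) := mul_comm _ _
    refine le_antisymm (iSup_le fun k => hitAux_le_one 𝔰 k [] σ) ?_
    have hlow : ∀ n : ℕ, 1 - (1 - δ) ^ n ≤ M.hitProb 𝔰 σ T := by
      intro n
      refine le_iSup_of_le (n * N) ?_
      rw [tsub_le_iff_right]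
      calc (1:ℝ≥0∞) = M.hitProbAux 𝔰 T (n * N) [] σ + avoidAux M 𝔰 T (n * N) [] σ :=
            (hit_add_avoid 𝔰 (n * N) [] σ).symm
        _ ≤ M.hitProbWithin 𝔰 σ T (n * N) + (1 - δ) ^ n := add_le_add_right (hpow n) _
    have hone : (⨆ n : ℕ, (1 - (1 - δ) ^ n : ℝ≥0∞)) = 1 := by
      have hlt : 1 - δ < 1 := ENNReal.sub_lt_self ENNReal.one_ne_top one_ne_zero hδpos.ne'
      rw [← ENNReal.sub_iInf, iInf_pow_eq_zero hlt, tsub_zero]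
    calc (1:ℝ≥0∞) = ⨆ n : ℕ, (1 - (1 - δ) ^ n : ℝ≥0∞) := hone.symm
      _ ≤ M.hitProb 𝔰 σ T := iSup_le hlow
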